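/- If a family of measurable sets satisfies Ω_{k+1} ⊆ Ω_k and each Ω_k is a disjoint union of cubes Q^k_j with |Q^k_j ∩ Ω_{k+1}| ≤ (1/2)|Q^k_j|, then for any fixed cube Q, defining 𝒬_0(Q) as the maximal cubes of the family contained in Q and inductively 𝒬_k(Q) as the maximal cubes of the family strictly contained in some cube of 𝒬_{k-1}(Q), one has |⋃𝒬_k(Q)| ≤ 2^{-k}|Q| for all k ≥ 0. -/
import Mathlib


open MeasureTheory Set ENNReal

noncomputable section

/-- A dyadic cube in `ℝ^d`, given by a scale `k` and position `m`. -/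
structure DC (d : ℕ) where
  k : ℤ
  m : Fin d → ℤ

namespace DC

variable {d : ℕ}

/-- The underlying set of a dyadic cube. -/
def set (Q : DC d) : Set (Fin d → ℝ) :=
  {x | ∀ i, (Q.m i : ℝ) * 2 ^ Q.k ≤ x i ∧ x i < ((Q.m i : ℝ) + 1) * 2 ^ Q.k}

/-- The side length of a dyadic cube. -/
def side (Q : DC d) : ℝ := 2 ^ Q.k

/-- The dyadic parent. -/
def parent (Q : DC d) : DC d := ⟨Q.k + 1, fun i => Int.fdiv (Q.m i) 2⟩

/-- The `i`-th dyadic ancestor. -/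
def anc (Q : DC d) : ℕ → DC d
  | 0 => Q
  | (i + 1) => (Q.anc i).parent

end DC

/-- An axis-parallel cube with corner `c` and side length `h`. -/
def cube {d : ℕ} (c : Fin d → ℝ) (h : ℝ) : Set (Fin d → ℝ) :=
  {x | ∀ i, c i ≤ x i ∧ x i ≤ c i + h}

/-- The generations `𝒬_k(Q0)` of maximal cubes of the family `𝒬` inside `Q0`:
`𝒬_0(Q0)` are the maximal cubes of `𝒬` contained in `Q0`, and `𝒬_{k+1}(Q0)` are the
maximal cubes of `𝒬` strictly contained in some cube of `𝒬_k(Q0)`. -/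
def gen {d : ℕ} (𝒬 : Set (DC d)) (Q0 : DC d) : ℕ → Set (DC d)
  | 0 => {R | R ∈ 𝒬 ∧ R.set ⊆ Q0.set ∧
      ∀ R' ∈ 𝒬, R'.set ⊆ Q0.set → R.set ⊆ R'.set → R'.set ⊆ R.set}
  | (n + 1) => {R | R ∈ 𝒬 ∧ (∃ S ∈ gen 𝒬 Q0 n, R.set ⊂ S.set) ∧
      ∀ R' ∈ 𝒬, (∃ S ∈ gen 𝒬 Q0 n, R'.set ⊂ S.set) → R.set ⊆ R'.set → R'.set ⊆ R.set}

namespace CZAux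

variable {d : ℕ}

lemma dc_set_eq (Q : DC d) : Q.set =
    Set.pi univ (fun i => Ico ((Q.m i : ℝ) * 2 ^ Q.k) (((Q.m i : ℝ) + 1) * 2 ^ Q.k)) := by
  ext x; simp [DC.set, Set.mem_pi, Set.mem_Ico]

lemma dc_measurable (Q : DC d) : MeasurableSet Q.set := by
  rw [dc_set_eq]; exact MeasurableSet.univ_pi fun i => measurableSet_Ico

lemma dc_volume (Q : DC d) : volume Q.set = (ENNReal.ofReal ((2:ℝ) ^ Q.k)) ^ d := by
  rw [dc_set_eq, volume_pi_pi]
  have : ∀ i : Fin d, volume (Ico ((Q.m i : ℝ) * 2 ^ Q.k) (((Q.m i : ℝ) + 1) * 2 ^ Q.k))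
      = ENNReal.ofReal ((2:ℝ) ^ Q.k) := by
    intro i; rw [Real.volume_Ico]; ring_nf
  simp [this]

lemma dc_volume_ne_zero (Q : DC d) : volume Q.set ≠ 0 := by
  rw [dc_volume]
  exact pow_ne_zero _ (by simp [ENNReal.ofReal_eq_zero, not_le]; positivity)

lemma dc_volume_ne_top (Q : DC d) : volume Q.set ≠ ⊤ :=
  by rw [dc_volume]; exact ENNReal.pow_ne_top ENNReal.ofReal_ne_top

lemma dc_nonempty (Q : DC d) : Q.set.Nonempty := by
  refine ⟨fun i => (Q.m i : ℝ) * 2 ^ Q.k, fun i => ⟨le_rfl, ?_⟩⟩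
  have h2 : (0:ℝ) < 2 ^ Q.k := by positivity
  show (Q.m i : ℝ) * 2 ^ Q.k < ((Q.m i : ℝ) + 1) * 2 ^ Q.k
  nlinarith

/-- 1-D dyadic nesting: if two dyadic intervals meet and the first has smaller scale,
any point in the first is in the second. -/
lemma dyadic_interval_subset {k k' : ℤ} (hk : k ≤ k') {m m' : ℤ} {x y : ℝ}
    (hx1 : (m : ℝ) * 2 ^ k ≤ x) (hx2 : x < ((m : ℝ) + 1) * 2 ^ k)
    (hx1' : (m' : ℝ) * 2 ^ k' ≤ x) (hx2' : x < ((m' : ℝ) + 1) * 2 ^ k')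
    (hy1 : (m : ℝ) * 2 ^ k ≤ y) (hy2 : y < ((m : ℝ) + 1) * 2 ^ k) :
    (m' : ℝ) * 2 ^ k' ≤ y ∧ y < ((m' : ℝ) + 1) * 2 ^ k' := by
  have hc : (0:ℝ) < 2 ^ k := by positivity
  set e : ℕ := (k' - k).toNat with he
  have hke : k' = (e : ℤ) + k := by
    rw [he, Int.toNat_of_nonneg (by omega)]; ring
  have h2k' : (2:ℝ) ^ k' = (2 ^ e : ℤ) * 2 ^ k := by
    rw [hke, zpow_add₀ (by norm_num : (2:ℝ) ≠ 0)]
    push_cast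
    rw [zpow_natCast]
  set a : ℤ := m' * 2 ^ e with ha
  have hA : (m' : ℝ) * 2 ^ k' = (a : ℝ) * 2 ^ k := by
    rw [h2k', ha]; push_cast; ring
  have hB : ((m' : ℝ) + 1) * 2 ^ k' = ((a + 2 ^ e : ℤ) : ℝ) * 2 ^ k := by
    rw [h2k', ha]; push_cast; ring
  constructor
  · -- a ≤ m
    have h1 : (a : ℝ) * 2 ^ k < ((m : ℝ) + 1) * 2 ^ k := by
      rw [← hA]; exact lt_of_le_of_lt hx1' hx2
    have h2 : (a : ℝ) < (m : ℝ) + 1 := lt_of_mul_lt_mul_right h1 hc.le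
    have h3 : a ≤ m := by exact_mod_cast Int.lt_add_one_iff.mp (by exact_mod_cast h2)
    rw [hA]
    calc (a : ℝ) * 2 ^ k ≤ (m : ℝ) * 2 ^ k := by
          apply mul_le_mul_of_nonneg_right _ hc.le; exact_mod_cast h3
      _ ≤ y := hy1
  · -- m + 1 ≤ a + 2^e
    have h1 : (m : ℝ) * 2 ^ k < ((a + 2 ^ e : ℤ) : ℝ) * 2 ^ k := by
      rw [← hB]; exact lt_of_le_of_lt hx1 hx2'
    have h2 : (m : ℝ) < ((a + 2 ^ e : ℤ) : ℝ) := lt_of_mul_lt_mul_right h1 hc.le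
    have h3 : m + 1 ≤ a + 2 ^ e := by
      have : m < a + 2 ^ e := by exact_mod_cast h2
      omega
    rw [hB]
    calc y < ((m : ℝ) + 1) * 2 ^ k := hy2
      _ ≤ ((a + 2 ^ e : ℤ) : ℝ) * 2 ^ k := by
          apply mul_le_mul_of_nonneg_right _ hc.le
          exact_mod_cast h3

/-- Two dyadic cubes that intersect are nested. -/
lemma dc_subset_or_subset {Q Q' : DC d} (h : (Q.set ∩ Q'.set).Nonempty) :
    Q.set ⊆ Q'.set ∨ Q'.set ⊆ Q.set := by
  obtain ⟨x, hx, hx'⟩ := h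
  rcases le_total Q.k Q'.k with hk | hk
  · left
    intro y hy i
    exact dyadic_interval_subset hk (hx i).1 (hx i).2 (hx' i).1 (hx' i).2 (hy i).1 (hy i).2
  · right
    intro y hy i
    exact dyadic_interval_subset hk (hx' i).1 (hx' i).2 (hx i).1 (hx i).2 (hy i).1 (hy i).2

lemma gen_subset (𝒬 : Set (DC d)) (Q0 : DC d) (n : ℕ) : gen 𝒬 Q0 n ⊆ 𝒬 := by
  cases n <;> exact fun R hR => hR.1

lemma gen_max {𝒬 : Set (DC d)} {Q0 : DC d} {n : ℕ} {S₁ S₂ : DC d}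
    (h1 : S₁ ∈ gen 𝒬 Q0 n) (h2 : S₂ ∈ gen 𝒬 Q0 n) (hs : S₁.set ⊆ S₂.set) :
    S₂.set ⊆ S₁.set := by
  cases n with
  | zero => exact h1.2.2 S₂ h2.1 h2.2.1 hs
  | succ m => exact h1.2.2 S₂ h2.1 h2.2.1 hs

lemma gen_eq_or_disjoint {𝒬 : Set (DC d)} {Q0 : DC d} {n : ℕ} {S₁ S₂ : DC d}
    (h1 : S₁ ∈ gen 𝒬 Q0 n) (h2 : S₂ ∈ gen 𝒬 Q0 n) :
    S₁.set = S₂.set ∨ Disjoint S₁.set S₂.set := by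
  by_cases hd : Disjoint S₁.set S₂.set
  · exact Or.inr hd
  · left
    rcases dc_subset_or_subset (not_disjoint_iff_nonempty_inter.mp hd) with h | h
    · exact subset_antisymm h (gen_max h1 h2 h)
    · exact subset_antisymm (gen_max h2 h1 h) h

end CZAux

open CZAux in
/-- Key lemma: a cube of the family strictly contained in `Qf k j` lies in `Ω_{k+1}`. -/
lemma cz_key {d : ℕ} (Qf : ℕ → ℕ → DC d)
    (hdisj : ∀ k, Pairwise fun j j' => Disjoint (Qf k j).set (Qf k j').set)
    (hnest : ∀ k, (⋃ j, (Qf (k + 1) j).set) ⊆ ⋃ j, (Qf k j).set)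
    (hsparse : ∀ k j,
      volume ((Qf k j).set ∩ ⋃ j', (Qf (k + 1) j').set) ≤ volume (Qf k j).set / 2)
    {k j k' j' : ℕ} (hsub : (Qf k' j').set ⊂ (Qf k j).set) :
    (Qf k' j').set ⊆ ⋃ j'', (Qf (k + 1) j'').set := by
  have hΩ : Antitone fun k => ⋃ j, (Qf k j).set := antitone_nat_of_succ_le hnest
  rcases lt_trichotomy k' k with hlt | heq | hgt
  · exfalso
    have h1 : (Qf k' j').set ⊆ ⋃ j'', (Qf (k' + 1) j'').set := by
      refine hsub.subset.trans ((subset_iUnion (fun j => (Qf k j).set) j).trans ?_)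
      exact hΩ (by omega : k' + 1 ≤ k)
    have h2 : volume ((Qf k' j').set ∩ ⋃ j'', (Qf (k' + 1) j'').set) = volume (Qf k' j').set := by
      rw [inter_eq_left.mpr h1]
    have h3 := hsparse k' j'
    rw [h2] at h3
    exact absurd h3 (not_le.mpr (ENNReal.half_lt_self (dc_volume_ne_zero _) (dc_volume_ne_top _)))
  · exfalso
    subst heq
    rcases eq_or_ne j' j with rfl | hj
    · exact hsub.ne rfl
    · obtain ⟨x, hx⟩ := dc_nonempty (Qf k' j')
      exact (disjoint_left.mp (hdisj k' hj)) hx (hsub.subset hx)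
  · exact ((subset_iUnion (fun j => (Qf k' j).set) j').trans (hΩ (by omega : k + 1 ≤ k')))

open CZAux in
/-- Halving step. -/
lemma cz_halving {d : ℕ} (Qf : ℕ → ℕ → DC d)
    (hdisj : ∀ k, Pairwise fun j j' => Disjoint (Qf k j).set (Qf k j').set)
    (hnest : ∀ k, (⋃ j, (Qf (k + 1) j).set) ⊆ ⋃ j, (Qf k j).set)
    (hsparse : ∀ k j,
      volume ((Qf k j).set ∩ ⋃ j', (Qf (k + 1) j').set) ≤ volume (Qf k j).set / 2)
    (Q0 : DC d) (n : ℕ) :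
    volume (⋃ R ∈ gen {R | ∃ k' j, Qf k' j = R} Q0 (n + 1), DC.set R)
      ≤ volume (⋃ R ∈ gen {R | ∃ k' j, Qf k' j = R} Q0 n, DC.set R) / 2 := by
  set 𝒬 : Set (DC d) := {R | ∃ k' j, Qf k' j = R} with h𝒬
  have h𝒬c : 𝒬.Countable := by
    have : 𝒬 = ⋃ k', Set.range (Qf k') := by
      ext R; simp [h𝒬, Set.mem_iUnion, Set.mem_range]
    rw [this]; exact countable_iUnion fun k' => countable_range _
  set G := gen 𝒬 Q0 n with hG
  set T : Set (Set (Fin d → ℝ)) := DC.set '' G with hT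
  have hTc : T.Countable := ((h𝒬c.mono (gen_subset 𝒬 Q0 n)).image _)
  have hTd : T.Pairwise Disjoint := by
    rintro _ ⟨S₁, hS₁, rfl⟩ _ ⟨S₂, hS₂, rfl⟩ hne
    rcases gen_eq_or_disjoint hS₁ hS₂ with h | h
    · exact absurd h hne
    · exact h
  have hTm : ∀ t ∈ T, MeasurableSet t := by
    rintro _ ⟨S, _, rfl⟩; exact dc_measurable S
  have hrep : ∀ t : T, ∃ k' j, (Qf k' j).set = (t : Set (Fin d → ℝ)) := by
    rintro ⟨t, S, hS, rfl⟩
    obtain ⟨k', j, rfl⟩ := gen_subset 𝒬 Q0 n hS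
    exact ⟨k', j, rfl⟩
  choose K J hKJ using hrep
  haveI : Countable T := hTc.to_subtype
  have step1 : (⋃ R ∈ gen 𝒬 Q0 (n + 1), DC.set R) ⊆
      ⋃ t : T, ((t : Set (Fin d → ℝ)) ∩ ⋃ j', (Qf (K t + 1) j').set) := by
    intro x hx
    simp only [mem_iUnion] at hx ⊢
    obtain ⟨R, hR, hxR⟩ := hx
    obtain ⟨S, hS, hRS⟩ := hR.2.1
    have htT : S.set ∈ T := ⟨S, hS, rfl⟩
    refine ⟨⟨S.set, htT⟩, ?_, ?_⟩
    · exact hRS.subset hxR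
    · have hRS' : R.set ⊂ (Qf (K ⟨S.set, htT⟩) (J ⟨S.set, htT⟩)).set := by
        rw [hKJ ⟨S.set, htT⟩]; exact hRS
      obtain ⟨kR, jR, rfl⟩ := hR.1
      exact cz_key Qf hdisj hnest hsparse hRS' hxR
  calc volume (⋃ R ∈ gen 𝒬 Q0 (n + 1), DC.set R)
      ≤ volume (⋃ t : T, ((t : Set (Fin d → ℝ)) ∩ ⋃ j', (Qf (K t + 1) j').set)) :=
        measure_mono step1
    _ ≤ ∑' t : T, volume ((t : Set (Fin d → ℝ)) ∩ ⋃ j', (Qf (K t + 1) j').set) :=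
        measure_iUnion_le _
    _ ≤ ∑' t : T, volume (t : Set (Fin d → ℝ)) / 2 := by
        refine ENNReal.tsum_le_tsum fun t => ?_
        rw [← hKJ t]
        exact hsparse _ _
    _ = (∑' t : T, volume (t : Set (Fin d → ℝ))) / 2 := by
        simp only [div_eq_mul_inv, ENNReal.tsum_mul_right]
    _ = volume (⋃₀ T) / 2 := by rw [measure_sUnion hTc hTd hTm]
    _ = volume (⋃ R ∈ G, DC.set R) / 2 := by rw [hT, sUnion_image]

/-- for a Calderón–Zygmund-type sparse family `{Q^k_j}` with
`Ω_{k+1} ⊆ Ω_k` (disjoint unions of cubes) and `|Q^k_j ∩ Ω_{k+1}| ≤ |Q^k_j|/2`, the union of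
the `k`-th generation of maximal cubes inside any cube `Q0` has measure at most `2^{-k}|Q0|`. -/
theorem stmt0 {d : ℕ} (Qf : ℕ → ℕ → DC d)
    (hdisj : ∀ k, Pairwise fun j j' => Disjoint (Qf k j).set (Qf k j').set)
    (hnest : ∀ k, (⋃ j, (Qf (k + 1) j).set) ⊆ ⋃ j, (Qf k j).set)
    (hsparse : ∀ k j,
      volume ((Qf k j).set ∩ ⋃ j', (Qf (k + 1) j').set) ≤ volume (Qf k j).set / 2)
    (Q0 : DC d) (k : ℕ) :
    volume (⋃ R ∈ gen {R | ∃ k' j, Qf k' j = R} Q0 k, DC.set R)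
      ≤ volume Q0.set / 2 ^ k := by
  induction k with
  | zero =>
    simp only [pow_zero, div_one]
    refine measure_mono ?_
    refine iUnion₂_subset fun R hR => ?_
    exact hR.2.1
  | succ n ih =>
    calc volume (⋃ R ∈ gen {R | ∃ k' j, Qf k' j = R} Q0 (n + 1), DC.set R)
        ≤ volume (⋃ R ∈ gen {R | ∃ k' j, Qf k' j = R} Q0 n, DC.set R) / 2 :=
          cz_halving Qf hdisj hnest hsparse Q0 n
      _ ≤ (volume Q0.set / 2 ^ n) / 2 := ENNReal.div_le_div_right ih 2
      _ = volume Q0.set / 2 ^ (n + 1) := by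
        rw [pow_succ, div_eq_mul_inv, div_eq_mul_inv, div_eq_mul_inv, mul_assoc,
          ENNReal.mul_inv (by simp) (by simp)]
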